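/- Let (X, d) be a metric space and for each i ∈ ℕ let F_i = {X; f_{1,i}, …, f_{n_i,i}} be a function system whose maps f_{r,i} : X → X are φ_{r,i}-contractions for comparison functions φ_{r,i}, and let φ_i = max_{r=1,…,n_i} φ_{r,i} be the comparison function of the induced set map F_i(A) = ⋃_{r=1}^{n_i} f_{r,i}(A) on (H(X), h). If for every t > 0 the compositions φ₁∘φ₂∘⋯∘φ_k(t) tend to 0 as k → ∞, then for all A, B ∈ H(X) both the forward SFS trajectories and the backward SFS trajectories are asymptotically similar: h(Φ_k(A), Φ_k(B)) → 0 and h(Ψ_k(A), Ψ_k(B)) → 0 as k → ∞, where Φ_k = F_k∘F_{k−1}∘⋯∘F₁ and Ψ_k = F₁∘F₂∘⋯∘F_k (with the φ_i composed in the order matching the trajectory for the forward case). -/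

import Mathlib

open Filter Set Topology

/-- Backward composition: `bwdComp g k = g 0 ∘ g 1 ∘ ⋯ ∘ g (k-1)`
(i.e. `g₁ ∘ g₂ ∘ ⋯ ∘ g_k` in 1-based notation). -/
def bwdComp {α : Type*} (g : ℕ → α → α) : ℕ → α → α
  | 0 => id
  | k + 1 => fun a => bwdComp g k (g k a)

/-- Forward composition: `fwdComp g k = g (k-1) ∘ ⋯ ∘ g 1 ∘ g 0`
(i.e. `g_k ∘ g_{k-1} ∘ ⋯ ∘ g₁` in 1-based notation). -/
def fwdComp {α : Type*} (g : ℕ → α → α) : ℕ → α → α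
  | 0 => id
  | k + 1 => fun a => g k (fwdComp g k a)

/-- **asymptotic similarity of SFS trajectories.** Let
`F i (A) = ⋃_{r < n i} f i r '' A` be the set maps of a sequence of function systems whose
maps `f i r` are `φ i r`-contractions for comparison functions `φ i r`, and let
`φmax i = max_r φ i r` be the comparison function of `F i`. If for every `t > 0` the
compositions of the `φmax i` (in the order matching the trajectory) tend to `0`, then the
forward SFS trajectories of any two nonempty compact sets are asymptotically similar in
the Hausdorff metric, and likewise the backward SFS trajectories. -/
theorem SFS_trajectories_asymptotically_similar {X : Type*} [MetricSpace X]
    (n : ℕ → ℕ) (hn : ∀ i, 0 < n i)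
    (f : (i : ℕ) → Fin (n i) → X → X)
    (φ : (i : ℕ) → Fin (n i) → ℝ → ℝ)
    (hmap : ∀ i r, ∀ t : ℝ, 0 ≤ t → 0 ≤ φ i r t)
    (hmono : ∀ i r, ∀ s t : ℝ, 0 ≤ s → s ≤ t → φ i r s ≤ φ i r t)
    (hiter : ∀ i r, ∀ t : ℝ, 0 ≤ t → Tendsto (fun p => (φ i r)^[p] t) atTop (nhds 0))
    (hcontr : ∀ i r, ∀ x y : X, dist (f i r x) (f i r y) ≤ φ i r (dist x y))
    (φmax : ℕ → ℝ → ℝ)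
    (hφmax : ∀ i t, φmax i t = ⨆ r : Fin (n i), φ i r t)
    (F : ℕ → Set X → Set X)
    (hF : ∀ i A, F i A = ⋃ r : Fin (n i), f i r '' A)
    (hfwd : ∀ t : ℝ, 0 < t → Tendsto (fun k => fwdComp φmax k t) atTop (nhds 0))
    (hbwd : ∀ t : ℝ, 0 < t → Tendsto (fun k => bwdComp φmax k t) atTop (nhds 0)) :
    ∀ A B : Set X, A.Nonempty → IsCompact A → B.Nonempty → IsCompact B →
      Tendsto (fun k => Metric.hausdorffDist (fwdComp F k A) (fwdComp F k B))
        atTop (nhds 0) ∧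
      Tendsto (fun k => Metric.hausdorffDist (bwdComp F k A) (bwdComp F k B))
        atTop (nhds 0) := by
  intro A B hAne hAc hBne hBc
  -- comparison functions satisfy φ t ≤ t for t ≥ 0
  have hφle : ∀ i r, ∀ t : ℝ, 0 ≤ t → φ i r t ≤ t := by
    intro i r t ht
    by_contra hlt
    push_neg at hlt
    have hb : ∀ p, 1 ≤ p → φ i r t ≤ (φ i r)^[p] t := by
      intro p hp
      induction p with
      | zero => omega
      | succ q ih =>
        rcases Nat.eq_or_lt_of_le hp with h1 | h1
        · simp [← h1]
        · have hq : 1 ≤ q := by omega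
          have := ih hq
          rw [Function.iterate_succ_apply']
          exact hmono i r t _ ht (le_of_lt (lt_of_lt_of_le hlt this))
    have h0 : (0:ℝ) < φ i r t := lt_of_le_of_lt ht hlt
    have : φ i r t ≤ 0 := by
      refine ge_of_tendsto (hiter i r t ht) ?_
      filter_upwards [Filter.eventually_ge_atTop 1] with p hp using hb p hp
    linarith
  -- properties of φmax
  have hbdd : ∀ i t, BddAbove (Set.range fun r : Fin (n i) => φ i r t) :=
    fun i t => (Set.finite_range _).bddAbove
  have hφmax_nonneg : ∀ i, ∀ t : ℝ, 0 ≤ t → 0 ≤ φmax i t := by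
    intro i t ht
    rw [hφmax]
    exact le_trans (hmap i ⟨0, hn i⟩ t ht) (le_ciSup (hbdd i t) _)
  have hφmax_mono : ∀ i, ∀ s t : ℝ, 0 ≤ s → s ≤ t → φmax i s ≤ φmax i t := by
    intro i s t hs hst
    have : Nonempty (Fin (n i)) := ⟨⟨0, hn i⟩⟩
    rw [hφmax, hφmax]
    exact ciSup_le fun r => le_trans (hmono i r s t hs hst) (le_ciSup (hbdd i t) r)
  -- maps are 1-Lipschitz, hence continuous
  have hlip : ∀ i r, LipschitzWith 1 (f i r) := by
    intro i r
    refine LipschitzWith.of_dist_le_mul fun x y => ?_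
    simpa using le_trans (hcontr i r x y) (hφle i r _ dist_nonneg)
  -- F preserves nonempty compact
  have hFC : ∀ i (A : Set X), A.Nonempty → IsCompact A →
      (F i A).Nonempty ∧ IsCompact (F i A) := by
    intro i A hne hc
    rw [hF]
    constructor
    · obtain ⟨a, ha⟩ := hne
      exact ⟨f i ⟨0, hn i⟩ a, Set.mem_iUnion.2 ⟨⟨0, hn i⟩, Set.mem_image_of_mem _ ha⟩⟩
    · exact isCompact_iUnion fun r => hc.image (hlip i r).continuous
  -- key one-step estimate
  have hstep : ∀ i (A B : Set X), A.Nonempty → IsCompact A → B.Nonempty → IsCompact B →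
      Metric.hausdorffDist (F i A) (F i B) ≤ φmax i (Metric.hausdorffDist A B) := by
    intro i A B hAne hAc hBne hBc
    have hfin : EMetric.hausdorffEdist A B ≠ ⊤ :=
      Metric.hausdorffEdist_ne_top_of_nonempty_of_bounded hAne hBne hAc.isBounded hBc.isBounded
    have key : ∀ (A B : Set X), A.Nonempty → IsCompact B → B.Nonempty →
        EMetric.hausdorffEdist A B ≠ ⊤ →
        ∀ x ∈ F i A, ∃ y ∈ F i B, dist x y ≤ φmax i (Metric.hausdorffDist A B) := by
      intro A B hAne hBc hBne hfin x hx
      rw [hF] at hx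
      obtain ⟨r, a, ha, rfl⟩ := by simpa using hx
      obtain ⟨b, hb, hdb⟩ := hBc.exists_infDist_eq_dist hBne a
      have h1 : dist a b ≤ Metric.hausdorffDist A B := by
        rw [← hdb]
        exact Metric.infDist_le_hausdorffDist_of_mem ha hfin
      refine ⟨f i r b, by rw [hF]; exact Set.mem_iUnion.2 ⟨r, Set.mem_image_of_mem _ hb⟩, ?_⟩
      calc dist (f i r a) (f i r b) ≤ φ i r (dist a b) := hcontr i r a b
        _ ≤ φ i r (Metric.hausdorffDist A B) := hmono i r _ _ dist_nonneg h1
        _ ≤ φmax i (Metric.hausdorffDist A B) := by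
            rw [hφmax]; exact le_ciSup (hbdd i _) r
    refine Metric.hausdorffDist_le_of_mem_dist
      (hφmax_nonneg i _ Metric.hausdorffDist_nonneg)
      (key A B hAne hBc hBne hfin) ?_
    intro x hx
    obtain ⟨y, hy, hxy⟩ := key B A hBne hAc hAne
      (by unfold EMetric.hausdorffEdist at hfin ⊢; rwa [EMetric.hausdorffEdist_comm]) x hx
    exact ⟨y, hy, by rwa [Metric.hausdorffDist_comm] at hxy⟩
  -- nonneg and monotonicity of composed comparison functions
  have hfwd_ok : ∀ k, ∀ s t : ℝ, 0 ≤ s → s ≤ t →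
      0 ≤ fwdComp φmax k s ∧ fwdComp φmax k s ≤ fwdComp φmax k t := by
    intro k
    induction k with
    | zero => intro s t hs hst; exact ⟨hs, hst⟩
    | succ k ih =>
      intro s t hs hst
      obtain ⟨h1, h2⟩ := ih s t hs hst
      exact ⟨hφmax_nonneg k _ h1, hφmax_mono k _ _ h1 h2⟩
  have hbwd_ok : ∀ k, ∀ s t : ℝ, 0 ≤ s → s ≤ t →
      0 ≤ bwdComp φmax k s ∧ bwdComp φmax k s ≤ bwdComp φmax k t := by
    intro k
    induction k with
    | zero => intro s t hs hst; exact ⟨hs, hst⟩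
    | succ k ih =>
      intro s t hs hst
      exact ih _ _ (hφmax_nonneg k s hs) (hφmax_mono k s t hs hst)
  -- trajectories are nonempty compact
  have htrajF : ∀ k, (fwdComp F k A).Nonempty ∧ IsCompact (fwdComp F k A) ∧
      (fwdComp F k B).Nonempty ∧ IsCompact (fwdComp F k B) := by
    intro k
    induction k with
    | zero => exact ⟨hAne, hAc, hBne, hBc⟩
    | succ k ih =>
      obtain ⟨h1, h2, h3, h4⟩ := ih
      obtain ⟨h5, h6⟩ := hFC k _ h1 h2
      obtain ⟨h7, h8⟩ := hFC k _ h3 h4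
      exact ⟨h5, h6, h7, h8⟩
  -- forward bound
  have boundF : ∀ k, Metric.hausdorffDist (fwdComp F k A) (fwdComp F k B) ≤
      fwdComp φmax k (Metric.hausdorffDist A B) := by
    intro k
    induction k with
    | zero => exact le_rfl
    | succ k ih =>
      obtain ⟨h1, h2, h3, h4⟩ := htrajF k
      calc Metric.hausdorffDist (F k (fwdComp F k A)) (F k (fwdComp F k B))
          ≤ φmax k (Metric.hausdorffDist (fwdComp F k A) (fwdComp F k B)) :=
            hstep k _ _ h1 h2 h3 h4
        _ ≤ φmax k (fwdComp φmax k (Metric.hausdorffDist A B)) :=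
            hφmax_mono k _ _ Metric.hausdorffDist_nonneg ih
  -- backward bound
  have boundB : ∀ k, ∀ (A B : Set X), A.Nonempty → IsCompact A → B.Nonempty → IsCompact B →
      Metric.hausdorffDist (bwdComp F k A) (bwdComp F k B) ≤
        bwdComp φmax k (Metric.hausdorffDist A B) := by
    intro k
    induction k with
    | zero => intro A B _ _ _ _; exact le_rfl
    | succ k ih =>
      intro A B hAne hAc hBne hBc
      obtain ⟨h1, h2⟩ := hFC k A hAne hAc
      obtain ⟨h3, h4⟩ := hFC k B hBne hBc
      calc Metric.hausdorffDist (bwdComp F k (F k A)) (bwdComp F k (F k B))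
          ≤ bwdComp φmax k (Metric.hausdorffDist (F k A) (F k B)) := ih _ _ h1 h2 h3 h4
        _ ≤ bwdComp φmax k (φmax k (Metric.hausdorffDist A B)) :=
            (hbwd_ok k _ _ Metric.hausdorffDist_nonneg
              (hstep k A B hAne hAc hBne hBc)).2
  -- conclude by squeezing against d + 1 > 0
  set d := Metric.hausdorffDist A B with hd
  have hd0 : 0 ≤ d := Metric.hausdorffDist_nonneg
  have hd1 : (0:ℝ) < d + 1 := by linarith
  constructor
  · refine squeeze_zero (fun k => Metric.hausdorffDist_nonneg)
      (fun k => (boundF k).trans (hfwd_ok k d (d + 1) hd0 (by linarith)).2) (hfwd _ hd1)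
  · refine squeeze_zero (fun k => Metric.hausdorffDist_nonneg)
      (fun k => ((boundB k A B hAne hAc hBne hBc).trans
        (hbwd_ok k d (d + 1) hd0 (by linarith)).2)) (hbwd _ hd1)
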